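/- For p ∈ (0,1), λ > 0, μ ∈ ℝ, with α = √(p/(1−p)) and β = λα/(α²+1), the integral of the asymmetric Laplace pdf ψ over (−∞, μ) equals p. -/

import Mathlib

open MeasureTheory Real

theorem asymmetric_laplace_left_mass
    (p l μ : ℝ) (hp : 0 < p) (hp1 : p < 1) (hl : 0 < l)
    (α β : ℝ) (hα : α = Real.sqrt (p / (1 - p))) (hβ : β = l * α / (α ^ 2 + 1)) :
    ∫ x in Set.Iio μ,
      (if μ ≤ x then β * Real.exp (-(l * α * (x - μ)))
       else β * Real.exp (l * α⁻¹ * (x - μ))) = p := by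
  have h1p : 0 < 1 - p := by linarith
  have hαpos : 0 < α := by
    rw [hα]; exact Real.sqrt_pos.2 (div_pos hp h1p)
  have hα2 : α ^ 2 = p / (1 - p) := by
    rw [hα, sq_sqrt (le_of_lt (div_pos hp h1p))]
  have hβpos : 0 < β := by
    rw [hβ]; positivity
  set c : ℝ := l * α⁻¹ with hc
  have hcpos : 0 < c := mul_pos hl (inv_pos.2 hαpos)
  -- simplify the integrand on Iio μ
  have hcongr : ∫ x in Set.Iio μ,
      (if μ ≤ x then β * Real.exp (-(l * α * (x - μ)))
       else β * Real.exp (l * α⁻¹ * (x - μ)))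
      = ∫ x in Set.Iio μ, β * Real.exp (c * (x - μ)) := by
    apply setIntegral_congr_fun measurableSet_Iio
    intro x hx
    simp only [Set.mem_Iio] at hx
    simp only [if_neg (not_le.2 hx)]
    rfl
  rw [hcongr]
  have hflip : ∫ x in Set.Iio μ, β * Real.exp (c * (x - μ))
      = ∫ y in Set.Ioi (-μ), β * Real.exp (-(c * (y + μ))) := by
    rw [← integral_Iic_eq_integral_Iio,
      ← integral_comp_neg_Iic μ (fun y => β * Real.exp (-(c * (y + μ))))]
    apply setIntegral_congr_fun measurableSet_Iic
    intro x _
    dsimp only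
    congr 1
    ring
  rw [hflip]
  have key : ∫ y in Set.Ioi (-μ), β * Real.exp (-(c * (y + μ))) = β / c := by
    have hderiv : ∀ y ∈ Set.Ici (-μ),
        HasDerivAt (fun y => -(β / c) * Real.exp (-(c * (y + μ))))
          (β * Real.exp (-(c * (y + μ)))) y := by
      intro y _
      have h1 : HasDerivAt (fun y => -(c * (y + μ))) (-c) y := by
        simpa using (((hasDerivAt_id y).add_const μ).const_mul c).fun_neg
      have : HasDerivAt (fun y => -(β / c) * Real.exp (-(c * (y + μ)))) _ y :=
        (h1.exp).const_mul (-(β / c))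
      convert this using 1
      field_simp
    have hpos : ∀ y ∈ Set.Ioi (-μ), 0 ≤ β * Real.exp (-(c * (y + μ))) := by
      intro y _; positivity
    have htend : Filter.Tendsto (fun y => -(β / c) * Real.exp (-(c * (y + μ))))
        Filter.atTop (nhds 0) := by
      have h1 : Filter.Tendsto (fun y : ℝ => c * (y + μ)) Filter.atTop Filter.atTop :=
        Filter.Tendsto.const_mul_atTop hcpos
          (Filter.tendsto_atTop_add_const_right _ μ Filter.tendsto_id)
      have h2 : Filter.Tendsto (fun y : ℝ => -(c * (y + μ))) Filter.atTop Filter.atBot :=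
        Filter.tendsto_neg_atTop_atBot.comp h1
      have := (Real.tendsto_exp_atBot.comp h2).const_mul (-(β / c))
      simpa using this
    have := integral_Ioi_of_hasDerivAt_of_nonneg' hderiv hpos htend
    rw [this]
    have h0 : -μ + μ = 0 := by ring
    rw [h0, mul_zero, neg_zero, Real.exp_zero]
    ring
  rw [key]
  have hαne : α ≠ 0 := ne_of_gt hαpos
  have hlne : l ≠ 0 := ne_of_gt hl
  have hstep : β / c = α ^ 2 / (α ^ 2 + 1) := by
    rw [hβ, hc]
    have hden : α ^ 2 + 1 ≠ 0 := by positivity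
    field_simp
  rw [hstep, hα2]
  have hden2 : p / (1 - p) + 1 ≠ 0 := by positivity
  field_simp
  ring
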